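/- (Entry of the Gr(3,7) twist table: T*(X^{134567}) = Δ₁₂₇Δ₅₆₇·Y^{123456}.) For all vectors v₁,…,v₇ ∈ ℝ³, set w_i := v_{i+1}×v_{i+2} with indices taken modulo 7 in {1,…,7}, and write Δ_{abc} := det(v_a,v_b,v_c). Then det(w₁×w₃, w₄×w₅, w₆×w₇) = Δ₁₂₇·Δ₅₆₇·det(v₆×v₁, v₂×v₃, v₄×v₅). -/
import Mathlib

/-- Determinant of the 3×3 real matrix with columns `a`, `b`, `c`. -/
noncomputable def det3 (a b c : Fin 3 → ℝ) : ℝ :=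
  (Matrix.of ![a, b, c]).transpose.det
/-- The standard cross product on `ℝ³`. -/
def cross (a b : Fin 3 → ℝ) : Fin 3 → ℝ := crossProduct a b

lemma L1 (a b c : Fin 3 → ℝ) : cross (cross a b) (cross b c) = det3 a b c • b := by
  funext i
  fin_cases i <;>
  simp [det3, cross, crossProduct, Matrix.det_fin_three, Matrix.transpose] <;> ring

lemma Lsmul (a b c : Fin 3 → ℝ) (s t : ℝ) :
    det3 a (s • b) (t • c) = s * t * det3 a b c := by
  simp [det3, Matrix.det_fin_three, Matrix.transpose]; ring

lemma Lcyc (a b c : Fin 3 → ℝ) : det3 a b c = det3 c a b := by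
  simp [det3, Matrix.det_fin_three, Matrix.transpose]; ring

lemma Lfin (v₁ v₂ v₃ v₄ v₅ v₆ : Fin 3 → ℝ) :
    det3 (cross (cross v₂ v₃) (cross v₄ v₅)) v₆ v₁
      = det3 (cross v₆ v₁) (cross v₂ v₃) (cross v₄ v₅) := by
  simp [det3, cross, crossProduct, Matrix.det_fin_three, Matrix.transpose]; ring

theorem twist_X134567 (v₁ v₂ v₃ v₄ v₅ v₆ v₇ w₁ w₂ w₃ w₄ w₅ w₆ w₇ : Fin 3 → ℝ)
    (hw₁ : w₁ = cross v₂ v₃) (hw₂ : w₂ = cross v₃ v₄) (hw₃ : w₃ = cross v₄ v₅)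
    (hw₄ : w₄ = cross v₅ v₆) (hw₅ : w₅ = cross v₆ v₇) (hw₆ : w₆ = cross v₇ v₁)
    (hw₇ : w₇ = cross v₁ v₂) :
    det3 (cross w₁ w₃) (cross w₄ w₅) (cross w₆ w₇)
      = det3 v₁ v₂ v₇ * det3 v₅ v₆ v₇
          * det3 (cross v₆ v₁) (cross v₂ v₃) (cross v₄ v₅) := by
  subst hw₁ hw₂ hw₃ hw₄ hw₅ hw₆ hw₇
  rw [L1 v₅ v₆ v₇, L1 v₇ v₁ v₂, Lsmul, Lfin, Lcyc v₇ v₁ v₂, Lcyc v₂ v₇ v₁]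
  ring
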